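/- Let G be a finite p-group and k a field of characteristic p > 0. Let M be a finite-dimensional kG-module admitting a finite filtration 0 = L_0 ⊆ L_1 ⊆ ⋯ ⊆ L_s = M by kG-submodules such that every successive quotient L_i/L_{i−1} admits good permutation resolutions. Then M admits good permutation resolutions. -/

import Mathlib

set_option maxHeartbeats 1000000
set_option synthInstance.maxHeartbeats 400000


open CategoryTheory

def IsPermutationModule (k G : Type) [Field k] [Group G]
    (P : Type) [AddCommGroup P] [Module (MonoidAlgebra k G) P] : Prop :=
  ∃ (X : Type) (_ : Fintype X) (m : MulAction G X),
    Nonempty (P ≃ₗ[MonoidAlgebra k G] (@Representation.ofMulAction k _ G _ X m).asModule)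

def HasPermResFreeUpTo (k G : Type) [Field k] [Group G] (m : ℕ)
    (M : Type) [AddCommGroup M] [Module (MonoidAlgebra k G) M] : Prop :=
  ∃ (n : ℕ) (P : ℕ → ModuleCat (MonoidAlgebra k G))
    (d : ∀ i, P (i + 1) ⟶ P i) (ε : P 0 ⟶ ModuleCat.of (MonoidAlgebra k G) M),
    (∀ i, IsPermutationModule k G (P i)) ∧
    (∀ i ≤ m, Module.Free (MonoidAlgebra k G) (P i)) ∧
    (∀ i, n < i → Subsingleton (P i)) ∧
    Function.Surjective ε ∧
    Function.Exact (d 0) ε ∧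
    ∀ i, Function.Exact (d (i + 1)) (d i)

def HasFinitePermRes (k G : Type) [Field k] [Group G]
    (M : Type) [AddCommGroup M] [Module (MonoidAlgebra k G) M] : Prop :=
  ∃ (n : ℕ) (P : ℕ → ModuleCat (MonoidAlgebra k G))
    (d : ∀ i, P (i + 1) ⟶ P i) (ε : P 0 ⟶ ModuleCat.of (MonoidAlgebra k G) M),
    (∀ i, IsPermutationModule k G (P i)) ∧
    (∀ i, n < i → Subsingleton (P i)) ∧
    Function.Surjective ε ∧
    Function.Exact (d 0) ε ∧
    ∀ i, Function.Exact (d (i + 1)) (d i)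

def HasGoodPermRes (k G : Type) [Field k] [Group G]
    (M : Type) [AddCommGroup M] [Module (MonoidAlgebra k G) M] : Prop :=
  ∀ m : ℕ, HasPermResFreeUpTo k G m M

variable (k G : Type) [Field k] [Group G]

section helper
variable {k G} {V W : Type} [AddCommGroup V] [Module k V] [AddCommGroup W] [Module k W]

lemma asAlgebraHom_congr (ρ : Representation k G V) (τ : Representation k G W)
    (f : V →ₗ[k] W) (hf : ∀ (g : G) (v : V), f (ρ g v) = τ g (f v)) :
    ∀ (r : MonoidAlgebra k G) (v : V),
      f (ρ.asAlgebraHom r v) = τ.asAlgebraHom r (f v) := by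
  intro r
  induction r using MonoidAlgebra.induction_on with
  | of g => intro v; simp [Representation.asAlgebraHom_of, hf]
  | add x y hx hy => intro v; simp [map_add, hx, hy]
  | smul r x hx => intro v; simp [map_smul, hx]

noncomputable def asModuleCongr (ρ : Representation k G V) (τ : Representation k G W)
    (f : V ≃ₗ[k] W) (hf : ∀ (g : G) (v : V), f (ρ g v) = τ g (f v)) :
    ρ.asModule ≃ₗ[MonoidAlgebra k G] τ.asModule where
  toFun v := τ.asModuleEquiv.symm (f (ρ.asModuleEquiv v))
  invFun w := ρ.asModuleEquiv.symm (f.symm (τ.asModuleEquiv w))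
  left_inv v := by simp
  right_inv w := by simp
  map_add' x y := by simp
  map_smul' r v := by
    apply τ.asModuleEquiv.injective
    simp only [RingHom.id_apply, AddEquiv.apply_symm_apply,
      Representation.asModuleEquiv_map_smul]
    exact asAlgebraHom_congr ρ τ f.toLinearMap hf r _
end helper

section prodsec
variable {k G} {V W : Type} [AddCommGroup V] [Module k V] [AddCommGroup W] [Module k W]

/-- The direct product of two representations. -/
def prodRep (ρ : Representation k G V) (τ : Representation k G W) :
    Representation k G (V × W) where
  toFun g := (ρ g).prodMap (τ g)
  map_one' := by ext x <;> simp
  map_mul' g h := by ext x <;> simp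

lemma prodRep_apply (ρ : Representation k G V) (τ : Representation k G W) (g : G) (x : V × W) :
    prodRep ρ τ g x = (ρ g x.1, τ g x.2) := rfl

lemma asAlgebraHom_prodRep (ρ : Representation k G V) (τ : Representation k G W)
    (r : MonoidAlgebra k G) (x : V × W) :
    (prodRep ρ τ).asAlgebraHom r x = (ρ.asAlgebraHom r x.1, τ.asAlgebraHom r x.2) := by
  induction r using MonoidAlgebra.induction_on with
  | of g => simp [Representation.asAlgebraHom_of, prodRep_apply]
  | add a b ha hb => simp [map_add, ha, hb, Prod.ext_iff]
  | smul r a ha => simp [map_smul, ha, Prod.ext_iff]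

/-- `asModule` of a product representation is the product of the `asModule`s. -/
noncomputable def asModuleProd (ρ : Representation k G V) (τ : Representation k G W) :
    (prodRep ρ τ).asModule ≃ₗ[MonoidAlgebra k G] (ρ.asModule × τ.asModule) where
  toFun v := (ρ.asModuleEquiv.symm ((((prodRep ρ τ).asModuleEquiv) v).1),
    τ.asModuleEquiv.symm ((((prodRep ρ τ).asModuleEquiv) v).2))
  invFun w := (prodRep ρ τ).asModuleEquiv.symm (ρ.asModuleEquiv w.1, τ.asModuleEquiv w.2)
  left_inv v := by simp
  right_inv w := by simp
  map_add' x y := by simp [Prod.ext_iff]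
  map_smul' r v := by
    have h1 := asAlgebraHom_prodRep ρ τ r ((prodRep ρ τ).asModuleEquiv v)
    ext
    · apply ρ.asModuleEquiv.injective
      simp only [RingHom.id_apply, AddEquiv.apply_symm_apply,
        Representation.asModuleEquiv_map_smul, h1, Prod.smul_fst, AddEquiv.apply_symm_apply, LinearEquiv.apply_symm_apply]
    · apply τ.asModuleEquiv.injective
      simp only [RingHom.id_apply, AddEquiv.apply_symm_apply,
        Representation.asModuleEquiv_map_smul, h1, Prod.smul_snd, AddEquiv.apply_symm_apply, LinearEquiv.apply_symm_apply]
end prodsec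

section permsec
variable {k G}

lemma IsPermutationModule.congr {P P' : Type} [AddCommGroup P]
    [Module (MonoidAlgebra k G) P] [AddCommGroup P'] [Module (MonoidAlgebra k G) P']
    (e : P ≃ₗ[MonoidAlgebra k G] P') (h : IsPermutationModule k G P) :
    IsPermutationModule k G P' := by
  obtain ⟨X, fX, mX, ⟨eX⟩⟩ := h
  exact ⟨X, fX, mX, ⟨e.symm.trans eX⟩⟩

lemma IsPermutationModule.prod {P Q : Type} [AddCommGroup P]
    [Module (MonoidAlgebra k G) P] [AddCommGroup Q] [Module (MonoidAlgebra k G) Q]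
    (hP : IsPermutationModule k G P) (hQ : IsPermutationModule k G Q) :
    IsPermutationModule k G (P × Q) := by
  obtain ⟨X, fX, mX, ⟨eX⟩⟩ := hP
  obtain ⟨Y, fY, mY, ⟨eY⟩⟩ := hQ
  letI := mX; letI := mY
  refine ⟨X ⊕ Y, inferInstance, inferInstance, ⟨?_⟩⟩
  have e1 : (P × Q) ≃ₗ[MonoidAlgebra k G]
      ((Representation.ofMulAction k G X).asModule × (Representation.ofMulAction k G Y).asModule) :=
    eX.prodCongr eY
  have e3 : (Representation.ofMulAction k G (X ⊕ Y)).asModule ≃ₗ[MonoidAlgebra k G]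
      (prodRep (Representation.ofMulAction k G X) (Representation.ofMulAction k G Y)).asModule := by
    refine asModuleCongr _ _ ((MonoidAlgebra.coeffLinearEquiv k).trans
      ((Finsupp.sumFinsuppLEquivProdFinsupp k).trans
        (LinearEquiv.prodCongr (MonoidAlgebra.coeffLinearEquiv k).symm
          (MonoidAlgebra.coeffLinearEquiv k).symm))) ?_
    intro g v
    refine Prod.ext ?_ ?_
    · ext z
      simp [prodRep_apply, MonoidAlgebra.coeffLinearEquiv]
    · ext z
      simp [prodRep_apply, MonoidAlgebra.coeffLinearEquiv]
  exact e1.trans ((asModuleProd _ _).symm.trans e3.symm)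

/-- The trivial (zero) permutation module on the empty G-set. -/
noncomputable def trivAction (G : Type) [Group G] : MulAction G Empty where
  smul _ x := x.elim
  one_smul x := x.elim
  mul_smul _ _ x := x.elim

lemma subsingleton_trivPerm :
    Subsingleton ((@Representation.ofMulAction k _ G _ Empty (trivAction G)).asModule) :=
  ⟨fun a b => congrArg MonoidAlgebra.ofCoeff (Finsupp.ext fun (x : Empty) => x.elim)⟩

lemma isPerm_trivPerm :
    IsPermutationModule k G ((@Representation.ofMulAction k _ G _ Empty (trivAction G)).asModule) :=
  ⟨Empty, inferInstance, trivAction G, ⟨LinearEquiv.refl _ _⟩⟩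
end permsec

section goodsec
variable {k G}

lemma hasGoodPermRes_of_subsingleton (M : Type) [AddCommGroup M]
    [Module (MonoidAlgebra k G) M] [hM : Subsingleton M] : HasGoodPermRes k G M := by
  intro m
  haveI : Subsingleton ↑(ModuleCat.of (MonoidAlgebra k G)
      ((@Representation.ofMulAction k _ G _ Empty (trivAction G)).asModule)) :=
    subsingleton_trivPerm (k := k) (G := G)
  refine ⟨0, fun _ => ModuleCat.of (MonoidAlgebra k G)
      ((@Representation.ofMulAction k _ G _ Empty (trivAction G)).asModule),
    fun _ => 0, 0, fun i => by exact isPerm_trivPerm,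
    fun i _ => inferInstance,
    fun i _ => inferInstance, fun y => ⟨0, @Subsingleton.elim _ hM _ _⟩, ?_, ?_⟩
  · intro y
    constructor
    · intro _; exact ⟨0, Subsingleton.elim _ _⟩
    · intro _; exact @Subsingleton.elim _ hM _ _
  · intro i y
    constructor
    · intro _; exact ⟨0, Subsingleton.elim _ _⟩
    · intro _; exact Subsingleton.elim _ _

lemma HasGoodPermRes.congr {M M' : Type} [AddCommGroup M] [Module (MonoidAlgebra k G) M]
    [AddCommGroup M'] [Module (MonoidAlgebra k G) M'] (e : M ≃ₗ[MonoidAlgebra k G] M')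
    (h : HasGoodPermRes k G M) : HasGoodPermRes k G M' := by
  intro m
  obtain ⟨n, P, d, ε, hperm, hfree, hsub, hsurj, hex0, hex⟩ := h m
  refine ⟨n, P, d, ModuleCat.ofHom (e.toLinearMap ∘ₗ ε.hom), hperm, hfree, hsub,
    ?_, ?_, hex⟩
  · intro y
    obtain ⟨x, hx⟩ := hsurj (e.symm y)
    exact ⟨x, by show e.toLinearMap (ε x) = y; rw [hx]; simp⟩
  · intro y
    show e.toLinearMap (ε y) = 0 ↔ _
    constructor
    · intro h'
      have h'' : ε y = 0 := e.injective (a₁ := ε y) (a₂ := 0) (by rw [map_zero]; exact h')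
      exact (hex0 y).mp h''
    · intro h'
      have h2 : ε y = 0 := (hex0 y).mpr h'
      show e.toLinearMap (ε y) = 0
      rw [h2, map_zero]
end goodsec

section extsec
variable {k G}

lemma exists_lift {R P M N' : Type} [Ring R] [AddCommGroup P] [AddCommGroup M] [AddCommGroup N']
    [Module R P] [Module R M] [Module R N'] [Module.Projective R P]
    (f : M →ₗ[R] N') (g : P →ₗ[R] N') (h : ∀ x, g x ∈ LinearMap.range f) :
    ∃ h' : P →ₗ[R] M, f ∘ₗ h' = g := by
  obtain ⟨h', hh'⟩ := Module.projective_lifting_property f.rangeRestrict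
    (g.codRestrict (LinearMap.range f) h) f.surjective_rangeRestrict
  refine ⟨h', ?_⟩
  ext x
  have h2 := LinearMap.congr_fun hh' x
  exact congrArg Subtype.val h2

lemma hasGoodPermRes_extension {A M N : Type} [AddCommGroup A] [AddCommGroup M] [AddCommGroup N]
    [Module (MonoidAlgebra k G) A] [Module (MonoidAlgebra k G) M] [Module (MonoidAlgebra k G) N]
    (ι : A →ₗ[MonoidAlgebra k G] M) (π : M →ₗ[MonoidAlgebra k G] N)
    (hι : Function.Injective ι) (hπ : Function.Surjective π)
    (hex : Function.Exact ι π)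
    (hA : HasGoodPermRes k G A) (hN : HasGoodPermRes k G N) :
    HasGoodPermRes k G M := by
  intro m
  obtain ⟨nP, P, dP, εP, hPperm, hPfree, hPsub, hPsurj, hPex0, hPex⟩ := hA m
  obtain ⟨nQ, Q, dQ, εQ, hQperm, hQfree, hQsub, hQsurj, hQex0, hQex⟩ := hN (max m (nP + 2))
  have hQproj : ∀ i, i ≤ max m (nP + 2) → Module.Projective (MonoidAlgebra k G) ↑(Q i) :=
    fun i hi => by haveI := hQfree i hi; exact Module.Projective.of_free
  -- lift of εQ along π
  haveI := hQproj 0 (le_trans (by omega) (le_max_right m (nP + 2)))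
  obtain ⟨σ, hσ⟩ := Module.projective_lifting_property π
    εQ.hom hπ
  -- θ 0
  haveI := hQproj 1 (le_trans (by omega) (le_max_right m (nP + 2)))
  obtain ⟨θ0, hθ0⟩ : ∃ θ0 : ↑(Q 1) →ₗ[MonoidAlgebra k G] ↑(P 0),
      (ι ∘ₗ εP.hom) ∘ₗ θ0 = -(σ ∘ₗ (dQ 0).hom) := by
    apply exists_lift
    intro x
    have h1 : π (σ ((dQ 0) x)) = 0 := by
      have h2 := LinearMap.congr_fun hσ ((dQ 0) x)
      simp only [LinearMap.comp_apply] at h2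
      rw [h2]
      exact (hQex0 _).mpr ⟨x, rfl⟩
    obtain ⟨a, ha⟩ := (hex _).mp h1
    obtain ⟨b, hb⟩ := hPsurj (-a)
    refine ⟨b, ?_⟩
    show ι (εP b) = -(σ ((dQ 0) x))
    rw [hb, map_neg, ha]
  -- θ 1
  haveI := hQproj 2 (le_trans (by omega) (le_max_right m (nP + 2)))
  obtain ⟨θ1, hθ1⟩ : ∃ θ1 : ↑(Q 2) →ₗ[MonoidAlgebra k G] ↑(P 1),
      (dP 0).hom ∘ₗ θ1 = -(θ0 ∘ₗ (dQ 1).hom) := by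
    apply exists_lift
    intro x
    have h1 : εP (θ0 ((dQ 1) x)) = 0 := by
      apply hι
      rw [map_zero]
      have h2 := LinearMap.congr_fun hθ0 ((dQ 1) x)
      simp only [LinearMap.comp_apply, LinearMap.neg_apply] at h2
      rw [(hQex 0).apply_apply_eq_zero x, map_zero, neg_zero] at h2
      exact h2
    obtain ⟨w, hw⟩ := (hPex0 _).mp h1
    exact ⟨-w, by show (dP 0) (-w) = -(θ0 ((dQ 1) x)); rw [map_neg, hw]⟩
  -- the inductive step producing all θ's
  have step : ∀ (i : ℕ)
      (pr : (↑(Q (i+1)) →ₗ[MonoidAlgebra k G] ↑(P i)) ×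
        (↑(Q (i+2)) →ₗ[MonoidAlgebra k G] ↑(P (i+1)))),
      (dP i).hom ∘ₗ pr.2 + pr.1 ∘ₗ (dQ (i+1)).hom = 0 →
      ∃ f : ↑(Q (i+3)) →ₗ[MonoidAlgebra k G] ↑(P (i+2)),
        (dP (i+1)).hom ∘ₗ f + pr.2 ∘ₗ (dQ (i+2)).hom = 0 := by
    intro i pr hpr
    rcases le_or_gt (i + 3) (max m (nP + 2)) with hle | hgt
    · haveI := hQproj (i+3) hle
      obtain ⟨f, hf⟩ : ∃ f : ↑(Q (i+3)) →ₗ[MonoidAlgebra k G] ↑(P (i+2)),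
          (dP (i+1)).hom ∘ₗ f = -(pr.2 ∘ₗ (dQ (i+2)).hom) := by
        apply exists_lift
        intro x
        have h1 : (dP i) (pr.2 ((dQ (i+2)) x)) = 0 := by
          have h2 := LinearMap.congr_fun hpr ((dQ (i+2)) x)
          simp only [LinearMap.add_apply, LinearMap.comp_apply, LinearMap.zero_apply] at h2
          rw [(hQex (i+1)).apply_apply_eq_zero x, map_zero, add_zero] at h2
          exact h2
        obtain ⟨w, hw⟩ := ((hPex i) _).mp h1
        exact ⟨-w, by show (dP (i+1)) (-w) = -(pr.2 ((dQ (i+2)) x)); rw [map_neg, hw]⟩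
      exact ⟨f, by rw [hf, neg_add_cancel]⟩
    · haveI : Subsingleton ↑(P (i+1)) :=
        hPsub (i+1) (by have := le_max_right m (nP + 2); omega)
      exact ⟨0, by ext x; exact Subsingleton.elim _ _⟩
  choose stepf hstep using step
  have h01 : (dP 0).hom ∘ₗ θ1 + θ0 ∘ₗ (dQ 1).hom = 0 := by rw [hθ1, neg_add_cancel]
  let Fam : ∀ i : ℕ, {pr : (↑(Q (i+1)) →ₗ[MonoidAlgebra k G] ↑(P i)) ×
      (↑(Q (i+2)) →ₗ[MonoidAlgebra k G] ↑(P (i+1))) //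
      (dP i).hom ∘ₗ pr.2 + pr.1 ∘ₗ (dQ (i+1)).hom = 0} :=
    fun i => Nat.rec ⟨(θ0, θ1), h01⟩
      (fun j x => ⟨(x.1.2, stepf j x.1 x.2), hstep j x.1 x.2⟩) i
  let θ : ∀ i, ↑(Q (i+1)) →ₗ[MonoidAlgebra k G] ↑(P i) := fun i => (Fam i).1.1
  have hθz : (ι ∘ₗ εP.hom) ∘ₗ θ 0 = -(σ ∘ₗ (dQ 0).hom) := hθ0
  have hθs : ∀ i, (dP i).hom ∘ₗ θ (i+1) + θ i ∘ₗ (dQ (i+1)).hom = 0 := fun i => (Fam i).2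
  refine ⟨max nP nQ,
    fun i => ModuleCat.of (MonoidAlgebra k G) (↑(P i) × ↑(Q i)),
    fun i => ModuleCat.ofHom (LinearMap.prod
      ((dP i).hom ∘ₗ LinearMap.fst (MonoidAlgebra k G) ↑(P (i+1)) ↑(Q (i+1))
        + (θ i) ∘ₗ LinearMap.snd (MonoidAlgebra k G) ↑(P (i+1)) ↑(Q (i+1)))
      ((dQ i).hom ∘ₗ LinearMap.snd (MonoidAlgebra k G) ↑(P (i+1)) ↑(Q (i+1)))),
    ModuleCat.ofHom ((ι ∘ₗ εP.hom ∘ₗ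
        LinearMap.fst (MonoidAlgebra k G) ↑(P 0) ↑(Q 0))
      + (σ ∘ₗ LinearMap.snd (MonoidAlgebra k G) ↑(P 0) ↑(Q 0))),
    ?_, ?_, ?_, ?_, ?_, ?_⟩
  · intro i
    exact (hPperm i).prod (hQperm i)
  · intro i hi
    haveI := hPfree i hi
    haveI := hQfree i (le_trans hi (le_max_left _ _))
    show Module.Free (MonoidAlgebra k G) (↑(P i) × ↑(Q i))
    infer_instance
  · intro i hi
    haveI := hPsub i (lt_of_le_of_lt (le_max_left _ _) hi)
    haveI := hQsub i (lt_of_le_of_lt (le_max_right _ _) hi)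
    show Subsingleton (↑(P i) × ↑(Q i))
    infer_instance
  · -- surjectivity
    intro u
    obtain ⟨v, hv⟩ : ∃ v : M, v = u := ⟨u, rfl⟩
    obtain ⟨y, hy⟩ := hQsurj (π v)
    have h2 : π (σ y) = εQ y := by
      have := LinearMap.congr_fun hσ y; simpa using this
    have h1 : π (v - σ y) = 0 := by rw [map_sub, h2, hy, sub_self]
    obtain ⟨a, ha⟩ := (hex _).mp h1
    obtain ⟨b, hb⟩ := hPsurj a
    refine ⟨(b, y), ?_⟩
    show ι (εP b) + σ y = u
    rw [← hv, hb, ha]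
    abel
  · -- exactness at degree 0
    intro v
    obtain ⟨v1, v2⟩ := v
    constructor
    · intro hv
      have hv' : ι (εP v1) + σ v2 = 0 := hv
      have h2 : εQ v2 = 0 := by
        have h3 := congrArg π hv'
        rw [map_add, map_zero] at h3
        have h4 : π (ι (εP v1)) = 0 := (hex _).mpr ⟨_, rfl⟩
        have h5 : π (σ v2) = εQ v2 := by
          have := LinearMap.congr_fun hσ v2; simpa using this
        rw [h4, zero_add, h5] at h3
        exact h3
      obtain ⟨y', hy'⟩ := (hQex0 _).mp h2
      have h6 : ι (εP (θ 0 y')) = -(σ ((dQ 0) y')) := by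
        have := LinearMap.congr_fun hθz y'
        simpa using this
      have h7 : εP (v1 - θ 0 y') = 0 := by
        apply hι
        rw [map_zero, map_sub, map_sub, h6, sub_neg_eq_add, hy']
        exact hv'
      obtain ⟨x', hx'⟩ := (hPex0 _).mp h7
      refine ⟨(x', y'), ?_⟩
      show ((dP 0) x' + θ 0 y', (dQ 0) y') = (v1, v2)
      rw [hx', hy']
      simp
    · rintro ⟨w, hw⟩
      obtain ⟨w1, w2⟩ := w
      rw [← hw]
      show ι (εP ((dP 0) w1 + θ 0 w2)) + σ ((dQ 0) w2) = 0
      have h8 : εP ((dP 0) w1) = 0 := hPex0.apply_apply_eq_zero w1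
      have h6 : ι (εP (θ 0 w2)) = -(σ ((dQ 0) w2)) := by
        have := LinearMap.congr_fun hθz w2
        simpa using this
      rw [map_add, map_add, h8, map_zero, zero_add, h6, neg_add_cancel]
  · -- exactness at higher degrees
    intro i v
    obtain ⟨v1, v2⟩ := v
    constructor
    · intro hv
      have hv1 : (dP i) v1 + θ i v2 = 0 := congrArg Prod.fst hv
      have hv2 : (dQ i) v2 = 0 := congrArg Prod.snd hv
      obtain ⟨y', hy'⟩ := ((hQex i) _).mp hv2
      have h6 : (dP i) (θ (i+1) y') = -(θ i ((dQ (i+1)) y')) := by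
        have := LinearMap.congr_fun (hθs i) y'
        simp only [LinearMap.add_apply, LinearMap.comp_apply, LinearMap.zero_apply] at this
        exact eq_neg_of_add_eq_zero_left this
      have h7 : (dP i) (v1 - θ (i+1) y') = 0 := by
        rw [map_sub, h6, sub_neg_eq_add, hy']
        exact hv1
      obtain ⟨x', hx'⟩ := ((hPex i) _).mp h7
      refine ⟨(x', y'), ?_⟩
      show ((dP (i+1)) x' + θ (i+1) y', (dQ (i+1)) y') = (v1, v2)
      rw [hx', hy']
      simp
    · rintro ⟨w, hw⟩
      obtain ⟨w1, w2⟩ := w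
      rw [← hw]
      show ((dP i) ((dP (i+1)) w1 + θ (i+1) w2) + θ i ((dQ (i+1)) w2),
        (dQ i) ((dQ (i+1)) w2)) = 0
      have h8 : (dP i) ((dP (i+1)) w1) = 0 := (hPex i).apply_apply_eq_zero w1
      have h9 : (dQ i) ((dQ (i+1)) w2) = 0 := (hQex i).apply_apply_eq_zero w2
      have h6 : (dP i) (θ (i+1) w2) = -(θ i ((dQ (i+1)) w2)) := by
        have := LinearMap.congr_fun (hθs i) w2
        simp only [LinearMap.add_apply, LinearMap.comp_apply, LinearMap.zero_apply] at this
        exact eq_neg_of_add_eq_zero_left this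
      rw [map_add, h8, zero_add, h6, neg_add_cancel, h9]
      rfl
end extsec

section mainsec
variable {k G}

lemma exact_subtype_mkQ' {R M : Type} [Ring R] [AddCommGroup M] [Module R M]
    (A : Submodule R M) : Function.Exact A.subtype A.mkQ := by
  intro y
  rw [Submodule.mkQ_apply, Submodule.Quotient.mk_eq_zero]
  constructor
  · intro hy; exact ⟨⟨y, hy⟩, rfl⟩
  · rintro ⟨⟨a, ha⟩, rfl⟩; exact ha

noncomputable def quotEquiv {R M : Type} [Ring R] [AddCommGroup M] [Module R M]
    {A B C : Submodule R M} (hBA : B ≤ A) :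
    (↥(Submodule.comap A.subtype B) ⧸
      (Submodule.comap (Submodule.comap A.subtype B).subtype (Submodule.comap A.subtype C)))
      ≃ₗ[R] (↥B ⧸ Submodule.comap B.subtype C) := by
  refine Submodule.Quotient.equiv _ _ (Submodule.comapSubtypeEquivOfLe hBA) ?_
  ext x
  simp only [Submodule.mem_map, Submodule.mem_comap]
  constructor
  · rintro ⟨y, hy, rfl⟩
    exact hy
  · intro hx
    exact ⟨⟨⟨(x : M), hBA x.2⟩, x.2⟩, hx, rfl⟩

noncomputable def topQuotEquiv {R M : Type} [Ring R] [AddCommGroup M] [Module R M]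
    {B : Submodule R M} (h : B = ⊤) (C : Submodule R M) :
    (↥B ⧸ Submodule.comap B.subtype C) ≃ₗ[R] (M ⧸ C) := by
  refine Submodule.Quotient.equiv _ _ ((LinearEquiv.ofEq B ⊤ h).trans (Submodule.topEquiv)) ?_
  ext x
  simp only [Submodule.mem_map, Submodule.mem_comap]
  constructor
  · rintro ⟨y, hy, rfl⟩
    exact hy
  · intro hx
    exact ⟨⟨x, by rw [h]; trivial⟩, hx, rfl⟩

lemma aux_main : ∀ (s : ℕ) (M : Type) [AddCommGroup M] [Module (MonoidAlgebra k G) M]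
    (L : Fin (s + 1) → Submodule (MonoidAlgebra k G) M), Monotone L → L 0 = ⊥ →
    L (Fin.last s) = ⊤ →
    (∀ i : Fin s, HasGoodPermRes k G
      (↥(L i.succ) ⧸ (Submodule.comap (L i.succ).subtype (L i.castSucc)))) →
    HasGoodPermRes k G M := by
  intro s
  induction s with
  | zero =>
    intro M _ _ L hmono h0 htop hquot
    haveI : Subsingleton M := by
      have hbt : (⊥ : Submodule (MonoidAlgebra k G) M) = ⊤ := by
        rw [← h0, ← htop]
        congr 1
      refine ⟨fun a b => ?_⟩
      have ha : a ∈ (⊥ : Submodule (MonoidAlgebra k G) M) := by rw [hbt]; trivial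
      have hb : b ∈ (⊥ : Submodule (MonoidAlgebra k G) M) := by rw [hbt]; trivial
      rw [Submodule.mem_bot] at ha hb
      rw [ha, hb]
    exact hasGoodPermRes_of_subsingleton M
  | succ s ih =>
    intro M _ _ L hmono h0 htop hquot
    have hLtop : L (Fin.last s).succ = ⊤ := by rw [Fin.succ_last]; exact htop
    have hNgood : HasGoodPermRes k G (M ⧸ L (Fin.castSucc (Fin.last s))) := by
      refine HasGoodPermRes.congr (topQuotEquiv hLtop _) ?_
      exact hquot (Fin.last s)
    have hAgood : HasGoodPermRes k G ↥(L (Fin.castSucc (Fin.last s))) := by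
      refine ih ↥(L (Fin.castSucc (Fin.last s)))
        (fun i => Submodule.comap (L (Fin.castSucc (Fin.last s))).subtype (L i.castSucc))
        (fun i j hij => Submodule.comap_mono (hmono (Fin.castSucc_le_castSucc_iff.mpr hij)))
        ?_ ?_ ?_
      · show Submodule.comap (L (Fin.last s).castSucc).subtype
            (L (Fin.castSucc (0 : Fin (s+1)))) = ⊥
        rw [Fin.castSucc_zero, h0, Submodule.comap_bot, Submodule.ker_subtype]
      · exact Submodule.comap_subtype_self _
      · intro i
        have h1 := hquot i.castSucc
        have hle : L (i.succ.castSucc) ≤ L (Fin.castSucc (Fin.last s)) :=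
          hmono (Fin.castSucc_le_castSucc_iff.mpr (Fin.le_last _))
        refine HasGoodPermRes.congr (quotEquiv hle).symm ?_
        rw [← Fin.succ_castSucc]
        exact h1
    refine hasGoodPermRes_extension (L (Fin.castSucc (Fin.last s))).subtype
      (L (Fin.castSucc (Fin.last s))).mkQ (Submodule.injective_subtype _)
      (Submodule.mkQ_surjective _) (exact_subtype_mkQ' _) hAgood hNgood
end mainsec

/-- If a finite-dimensional `kG`-module `M` (with `G` a finite `p`-group, `char k = p`)
has a finite filtration `0 = L₀ ⊆ L₁ ⊆ ⋯ ⊆ L_s = M` whose successive quotients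
`L_i / L_{i-1}` all admit good permutation resolutions, then `M` admits good
permutation resolutions. -/
theorem hasGoodPermRes_of_filtration
    (p : ℕ) (hp : p.Prime) (k : Type) [Field k] [CharP k p]
    (G : Type) [Group G] [Finite G] (hG : IsPGroup p G)
    (M : Type) [AddCommGroup M] [Module (MonoidAlgebra k G) M]
    [Module.Finite (MonoidAlgebra k G) M]
    (s : ℕ) (L : Fin (s + 1) → Submodule (MonoidAlgebra k G) M)
    (hmono : Monotone L) (h0 : L 0 = ⊥) (htop : L (Fin.last s) = ⊤)
    (hquot : ∀ i : Fin s,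
      HasGoodPermRes k G
        (↥(L i.succ) ⧸ (Submodule.comap (L i.succ).subtype (L i.castSucc)))) :
    HasGoodPermRes k G M := by
  exact aux_main s M L hmono h0 htop hquot
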